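/- arXiv:1811.00512 — 3 statements merged into one kernel-verified Lean document; each statement's English description precedes it below -/
import Mathlib

section
/- Let c₁ ≤ c₂ ≤ ... ≤ cₙ be real costs and s₁, ..., sₙ real scores, with n > k ≥ 1. Suppose a set b' ⊆ {1,...,n} with |b'| = k is chosen so that every index in b' has score at least as large as every index not in b' (i.e., b' consists of k top-scoring indices). Define the cost increase c(b,b') = min_{i∈b'} cᵢ − c₁. Then c(b,b') ≤ max(0, δ_{k+1}, ..., δₙ), where δⱼ = (cⱼ − c₁)(sⱼ − s₁ + 1). -/
/-- Upper-bound property of the "upper bound" surrogate loss: if costs are sorted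
increasingly, and `b'` is a set of `k` top-scoring indices, then the cost increase
`min_{i∈b'} cᵢ − c₁` is at most `max(0, δ_{k+1}, ..., δ_n)` where
`δⱼ = (cⱼ − c₁)(sⱼ − s₁ + 1)`. -/
theorem stmt4 (n k : ℕ) (hk : 1 ≤ k) (hkn : k < n)
    (c s : Fin n → ℝ) (hc : Monotone c)
    (b' : Finset (Fin n)) (hb : b'.Nonempty) (hcard : b'.card = k)
    (htop : ∀ i ∈ b', ∀ j ∉ b', s j ≤ s i)
    (hJ : (Finset.univ.filter fun j : Fin n => k ≤ (j : ℕ)).Nonempty) :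
    b'.inf' hb c - c ⟨0, by omega⟩ ≤
      max 0 ((Finset.univ.filter fun j : Fin n => k ≤ (j : ℕ)).sup' hJ
        fun j => (c j - c ⟨0, by omega⟩) * (s j - s ⟨0, by omega⟩ + 1)) := by
  set z : Fin n := ⟨0, by omega⟩ with hz
  by_cases h0 : z ∈ b'
  · have h1 : b'.inf' hb c ≤ c z := Finset.inf'_le _ h0
    exact le_trans (sub_nonpos.mpr h1) (le_max_left _ _)
  · -- there is j ∈ b' with k ≤ j
    have hex : ∃ j ∈ b', k ≤ (j : ℕ) := by
      by_contra h
      push_neg at h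
      have hsub : b' ⊆ (Finset.Iio (⟨k, hkn⟩ : Fin n)) \ {z} := by
        intro j hj
        simp only [Finset.mem_sdiff, Finset.mem_Iio, Finset.mem_singleton]
        refine ⟨?_, ?_⟩
        · exact Fin.lt_def.mpr (h j hj)
        · rintro rfl; exact h0 hj
      have hle := Finset.card_le_card hsub
      have hcard2 : ((Finset.Iio (⟨k, hkn⟩ : Fin n)) \ {z}).card = k - 1 := by
        rw [Finset.card_sdiff_of_subset (by
          simp only [Finset.singleton_subset_iff, Finset.mem_Iio]
          exact Fin.lt_def.mpr (by rw [hz]; exact hk))]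
        simp [Fin.card_Iio]
      omega
    obtain ⟨j, hjb, hjk⟩ := hex
    have h1 : b'.inf' hb c ≤ c j := Finset.inf'_le _ hjb
    have hzj : z ≤ j := by
      simp only [hz, Fin.le_def]; omega
    have hcz : c z ≤ c j := hc hzj
    have hs : s z ≤ s j := htop j hjb z h0
    have hδ : c j - c z ≤ (c j - c z) * (s j - s z + 1) :=
      le_mul_of_one_le_right (by linarith) (by linarith)
    have hmem : j ∈ Finset.univ.filter fun j : Fin n => k ≤ (j : ℕ) := by
      simp [hjk]
    have hsup : (c j - c z) * (s j - s z + 1) ≤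
        (Finset.univ.filter fun j : Fin n => k ≤ (j : ℕ)).sup' hJ
          fun j => (c j - c z) * (s j - s z + 1) :=
      Finset.le_sup' (fun j => (c j - c z) * (s j - s z + 1)) hmem
    have := le_max_right (0 : ℝ)
      ((Finset.univ.filter fun j : Fin n => k ≤ (j : ℕ)).sup' hJ
        fun j => (c j - c z) * (s j - s z + 1))
    linarith
end

section
/- Let c₁ ≤ c₂ ≤ ... ≤ cₙ and scores s₁,...,sₙ, with n > k ≥ 1. Let σ̂ be a permutation sorting scores decreasingly, and let b' = {σ̂(1),...,σ̂(k)} be the beam of top-k scoring indices. If the cost increase min_{i∈b'} cᵢ − c₁ is strictly positive, then s_{σ̂(k)} ≥ s₁ and c_{σ̂(k)} > c₁, and consequently min_{i∈b'} cᵢ − c₁ ≤ (c_{σ̂(k)} − c₁)·max(0, s_{σ̂(k)} − s₁ + 1). -/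
/-- Cost-sensitive margin loss upper bounds the beam transition cost: with costs
sorted increasingly, `σ̂` a permutation sorting scores decreasingly, and
`b' = {σ̂(1),...,σ̂(k)}` the top-`k` beam, if the cost increase
`min_{i∈b'} cᵢ − c₁` is strictly positive then `s_{σ̂(k)} ≥ s₁`, `c_{σ̂(k)} > c₁`,
and the cost increase is at most `(c_{σ̂(k)} − c₁)·max(0, s_{σ̂(k)} − s₁ + 1)`. -/
theorem stmt6 (n k : ℕ) (hk : 1 ≤ k) (hkn : k < n)
    (c s : Fin n → ℝ) (hc : Monotone c)
    (σ : Equiv.Perm (Fin n))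
    (hsort : ∀ i j : Fin n, i ≤ j → s (σ j) ≤ s (σ i))
    (b' : Finset (Fin n))
    (hb' : b' = (Finset.univ.filter fun i : Fin n => (i : ℕ) < k).image σ)
    (hb : b'.Nonempty)
    (hinc : 0 < b'.inf' hb c - c ⟨0, by omega⟩) :
    s ⟨0, by omega⟩ ≤ s (σ ⟨k - 1, by omega⟩) ∧
    c ⟨0, by omega⟩ < c (σ ⟨k - 1, by omega⟩) ∧
    b'.inf' hb c - c ⟨0, by omega⟩ ≤
      (c (σ ⟨k - 1, by omega⟩) - c ⟨0, by omega⟩) *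
        max 0 (s (σ ⟨k - 1, by omega⟩) - s ⟨0, by omega⟩ + 1) := by
  set z : Fin n := ⟨0, by omega⟩ with hzdef
  have hz : z ∉ b' := by
    intro h
    have := Finset.inf'_le c h
    linarith
  have hzk : k ≤ (σ.symm z : ℕ) := by
    by_contra h
    push_neg at h
    apply hz
    rw [hb']
    exact Finset.mem_image.mpr ⟨σ.symm z, Finset.mem_filter.mpr ⟨Finset.mem_univ _, h⟩,
      σ.apply_symm_apply z⟩
  have hmem : σ ⟨k - 1, by omega⟩ ∈ b' := by
    rw [hb']
    exact Finset.mem_image.mpr ⟨⟨k - 1, by omega⟩,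
      Finset.mem_filter.mpr ⟨Finset.mem_univ _, by simp; omega⟩, rfl⟩
  have hs : s z ≤ s (σ ⟨k - 1, by omega⟩) := by
    have := hsort ⟨k - 1, by omega⟩ (σ.symm z) (by
      show (⟨k - 1, by omega⟩ : Fin n) ≤ σ.symm z
      exact Fin.mk_le_of_le_val (by omega))
    rwa [σ.apply_symm_apply z] at this
  have hle : b'.inf' hb c ≤ c (σ ⟨k - 1, by omega⟩) := Finset.inf'_le c hmem
  have hcz : c z < c (σ ⟨k - 1, by omega⟩) := by linarith
  refine ⟨hs, hcz, ?_⟩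
  have h1 : (1 : ℝ) ≤ max 0 (s (σ ⟨k - 1, by omega⟩) - s z + 1) :=
    le_trans (by linarith) (le_max_right _ _)
  nlinarith
end

section
/- The function ℓ' : ℝ³ → ℝ defined by ℓ'(s) = ℓ(s)·𝟙[cost increase occurs] is not convex, where the setup is: n = 3 elements with costs c₁ = 0, c₂ = 1, c₃ = 1, beam size k = 2, the beam keeps the 2 top-scoring indices, a cost increase occurs iff index 1 is excluded from the beam, and ℓ is any surrogate loss that is strictly positive whenever a cost increase occurs. Specifically, for s = (1, 10, 0) and s' = (1, 0, 10) one has ℓ'(s) = ℓ'(s') = 0 yet ℓ'((s+s')/2) > 0, violating convexity. -/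
/-- Non-convexity from updating only on cost increases: with `n = 3` elements of
costs `(0,1,1)` and beam size `k = 2`, a cost increase occurs iff index `0` is
excluded from the top-2 beam (i.e. `s₀ < s₁` and `s₀ < s₂`). For any surrogate loss
`ℓ` that is strictly positive whenever a cost increase occurs, the gated loss
`ℓ'(s) = ℓ(s)·𝟙[cost increase]` vanishes at `s = (1,10,0)` and `s' = (1,0,10)` but is
positive at their midpoint `(1,5,5)`, hence `ℓ'` is not convex. -/
theorem stmt7 (ℓ : (Fin 3 → ℝ) → ℝ)
    (hpos : ∀ s : Fin 3 → ℝ, (s 0 < s 1 ∧ s 0 < s 2) → 0 < ℓ s)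
    (ℓ' : (Fin 3 → ℝ) → ℝ)
    (hℓ' : ∀ s : Fin 3 → ℝ, ℓ' s = if s 0 < s 1 ∧ s 0 < s 2 then ℓ s else 0) :
    ℓ' ![1, 10, 0] = 0 ∧ ℓ' ![1, 0, 10] = 0 ∧ 0 < ℓ' ![1, 5, 5] ∧
      ¬ ConvexOn ℝ Set.univ ℓ' := by
  have h1 : ℓ' ![1, 10, 0] = 0 := by
    rw [hℓ']; norm_num [Matrix.cons_val_two]
  have h2 : ℓ' ![1, 0, 10] = 0 := by
    rw [hℓ']; norm_num
  have h3 : 0 < ℓ' ![1, 5, 5] := by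
    rw [hℓ']
    have : (![1, 5, 5] : Fin 3 → ℝ) 0 < ![1, 5, 5] 1 ∧
        (![1, 5, 5] : Fin 3 → ℝ) 0 < ![1, 5, 5] 2 := by norm_num [Matrix.cons_val_two]
    rw [if_pos this]
    exact hpos _ this
  refine ⟨h1, h2, h3, fun hc => ?_⟩
  have key := hc.2 (Set.mem_univ ![1, 10, 0]) (Set.mem_univ ![1, 0, 10])
    (by norm_num : (0:ℝ) ≤ 1/2) (by norm_num : (0:ℝ) ≤ 1/2) (by norm_num)
  have heq : (1/2 : ℝ) • ![1, 10, 0] + (1/2 : ℝ) • ![1, 0, 10] = (![1, 5, 5] : Fin 3 → ℝ) := by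
    funext i
    fin_cases i <;> simp <;> norm_num
  rw [heq, h1, h2] at key
  simp at key; linarith
end
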